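/- Let X be a quandle of cyclic type (i.e., for each x ∈ X the permutation φ_x acts on X \ {x} as a single cycle of length |X| − 1) with |X| = n ≥ 3, and let x ∈ X. Then the stabilizer of x in G = Inn(X) is the cyclic group generated by φ_x. -/

import Mathlib

/-- The inner automorphism group of a quandle: the subgroup of permutations
generated by the maps `φ x : y ↦ x ◃ y`. -/
def Inn (X : Type*) [Quandle X] : Subgroup (Equiv.Perm X) :=
  Subgroup.closure (Set.range (fun x : X => Rack.act' x))


/-- A finite quandle is of cyclic type if each `φ x` is a cycle whose unique
fixed point is `x` (i.e. it acts as an `(n-1)`-cycle on `X \ {x}`). -/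
def IsCyclicType (X : Type*) [Quandle X] : Prop :=
  ∀ x : X, Equiv.Perm.IsCycle (Rack.act' x) ∧ ∀ y : X, Rack.act' x y = y ↔ y = x

/-- Inner automorphisms conjugate `φ y` to `φ (f y)`. -/
lemma inn_conj {X : Type*} [Quandle X] {f : Equiv.Perm X} (hf : f ∈ Inn X) :
    ∀ y : X, f * Rack.act' y * f⁻¹ = Rack.act' (f y) := by
  induction hf using Subgroup.closure_induction with
  | mem g hg =>
    obtain ⟨z, rfl⟩ := hg
    intro y
    simpa [Rack.act'_apply] using (Rack.ad_conj z y).symm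
  | one => simp
  | mul g h hg hh ihg ihh =>
    intro y
    have : g * (h * Rack.act' y * h⁻¹) * g⁻¹ = Rack.act' (g (h y)) := by
      rw [ihh y]; exact ihg (h y)
    simpa [mul_assoc] using this
  | inv g hg ihg =>
    intro y
    have := ihg (g⁻¹ y)
    rw [show g (g⁻¹ y) = y from Equiv.apply_symm_apply g y] at this
    rw [← this]
    group

theorem stmt4 {X : Type*} [Quandle X] [Fintype X] (h3 : 3 ≤ Fintype.card X)
    (hc : IsCyclicType X) (x : X) (f : Equiv.Perm X) :
    (f ∈ Inn X ∧ f x = x) ↔ f ∈ Subgroup.zpowers (Rack.act' x) := by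
  classical
  constructor
  · rintro ⟨hf, hfx⟩
    have hcomm : Commute f (Rack.act' x) := by
      have := inn_conj hf x
      rw [hfx] at this
      have : f * Rack.act' x = (f * Rack.act' x * f⁻¹) * f := by group
      rw [Commute, SemiconjBy, this, inn_conj hf x, hfx]
    obtain ⟨hc', hz⟩ := ((hc x).1.commute_iff).mp hcomm
    have hsupp : ∀ y : X, y ∉ Equiv.Perm.support (Rack.act' x) ↔ y = x := by
      intro y
      rw [Equiv.Perm.notMem_support]
      exact (hc x).2 y
    have : Equiv.Perm.ofSubtype (Equiv.Perm.subtypePerm f hc') = f := by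
      ext y
      by_cases hy : y ∈ Equiv.Perm.support (Rack.act' x)
      · rw [Equiv.Perm.ofSubtype_subtypePerm_of_mem hc' hy]
      · rw [Equiv.Perm.ofSubtype_apply_of_not_mem _ hy]
        rw [hsupp y] at hy
        subst hy
        exact hfx.symm
    rwa [this] at hz
  · intro hf
    obtain ⟨k, rfl⟩ := Subgroup.mem_zpowers_iff.mp hf
    refine ⟨zpow_mem (Subgroup.subset_closure (Set.mem_range_self x)) k, ?_⟩
    exact Equiv.Perm.zpow_apply_eq_self_of_apply_eq_self Quandle.fix k
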